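/- Let Σ = {0,1}, let k ≥ 1 be an integer, and let x = 0^k 1. Then for every word y over Σ: y belongs to the language (1 + 01 + 001 + ⋯ + 0^{k−1}1)⁺ 0^k 0^* (i.e., y is a nonempty concatenation of blocks each of the form 0^i 1 with 0 ≤ i ≤ k−1, followed by 0^m for some m ≥ k) if and only if x is not a subword of y but x is a subword of every y-bordered word. -/

import Mathlib

/-- Number of (possibly overlapping) occurrences of `x` as a contiguous
subword (factor) of `z`. -/
def occCount {α : Type*} [DecidableEq α] (x z : List α) : ℕ :=
  ((List.range (z.length + 1)).filter (fun i => decide (x <+: z.drop i))).length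

/-- `z` is `y`-bordered: `z ≠ y` and `y` is both a prefix and a suffix of `z`. -/
def IsBordered {α : Type*} (y z : List α) : Prop := z ≠ y ∧ y <+: z ∧ y <:+ z

/-- Over `Σ = {0,1}` (encoded as `Bool` with `0 = false`, `1 = true`), the language
`A = 01⁺ ∪ 10⁺ ∪ 0⁺1 ∪ 1⁺0`. -/
def memA (x : List Bool) : Prop :=
  ∃ i : ℕ, 1 ≤ i ∧
    (x = false :: List.replicate i true ∨ x = true :: List.replicate i false ∨
     x = List.replicate i false ++ [true] ∨ x = List.replicate i true ++ [false])

open List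

section Aux

lemma no_true_replicate {n : ℕ} (h : true ∈ List.replicate n false) : False := by
  simp [List.mem_replicate] at h

lemma rep_shuffle {a b c d : ℕ} (h : a + b = c + d) (X : List Bool) :
    replicate a false ++ (replicate b false ++ X)
      = replicate c false ++ (replicate d false ++ X) := by
  rw [← append_assoc, ← append_assoc, ← replicate_add, ← replicate_add, h]

/-- If `x = 0^k 1` is an infix of `0^i 1 r` with `i < k`, then it is an infix of `r`. -/
lemma lemE {k i : ℕ} (hik : i < k) {r : List Bool}
    (h : (replicate k false ++ [true]) <:+: (replicate i false ++ ([true] ++ r))) :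
    (replicate k false ++ [true]) <:+: r := by
  obtain ⟨s, t, hst⟩ := h
  by_cases hs : i + 1 ≤ s.length
  · have h1 : (replicate i false ++ [true]) <+: (replicate i false ++ ([true] ++ r)) := by
      rw [← append_assoc]; exact prefix_append _ r
    have h2 : s <+: (replicate i false ++ ([true] ++ r)) :=
      ⟨(replicate k false ++ [true]) ++ t, by rw [← hst]; simp [append_assoc]⟩
    obtain ⟨s', rfl⟩ := prefix_of_prefix_length_le h1 h2 (by simpa using hs)
    have := hst
    rw [append_assoc (replicate i false ++ [true]) s', append_assoc (replicate i false ++ [true])] at this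
    rw [append_assoc] at this
    exact ⟨s', t, by simpa [append_assoc] using append_cancel_left this⟩
  · exfalso
    push_neg at hs
    have hsl : s.length ≤ i := by omega
    set j := i - s.length with hj
    have hjk : j + 1 ≤ k := by omega
    have hR : List.drop s.length (replicate i false ++ ([true] ++ r))
        = replicate j false ++ ([true] ++ r) := by
      rw [drop_append, drop_replicate, length_replicate,
        Nat.sub_eq_zero_of_le hsl, drop_zero]
    rw [append_assoc, append_assoc] at hst
    have hd := congrArg (List.drop s.length) hst
    rw [drop_left, hR] at hd
    have hL : take (j+1) (replicate k false ++ ([true] ++ t)) = replicate (j+1) false := by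
      rw [take_append, take_replicate, length_replicate,
        Nat.sub_eq_zero_of_le hjk, take_zero, append_nil, min_eq_left hjk]
    have hRt : take (j+1) (replicate j false ++ ([true] ++ r)) = replicate j false ++ [true] := by
      rw [take_append, take_replicate, length_replicate,
        min_eq_right (by omega : j ≤ j + 1)]
      simp [show j + 1 - j = 1 by omega]
    have hfin : List.replicate (j+1) false = replicate j false ++ [true] := by
      rw [← hL, ← hRt, hd]
    exact no_true_replicate (by rw [hfin]; simp)

/-- `0^k 1` is not an infix of a block word followed by zeros. -/
lemma lemC {k : ℕ} : ∀ (bs : List ℕ), (∀ i ∈ bs, i < k) → ∀ m,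
    ¬ (replicate k false ++ [true]) <:+:
      ((bs.map (fun i => replicate i false ++ [true])).flatten ++ replicate m false) := by
  intro bs
  induction bs with
  | nil =>
    intro _ m h
    simp only [map_nil, flatten_nil, nil_append] at h
    exact no_true_replicate (h.subset (by simp))
  | cons i bs ih =>
    intro hlt m h
    simp only [map_cons, flatten_cons, append_assoc] at h
    exact ih (fun j hj => hlt j (by simp [hj])) m
      (by simpa [append_assoc] using lemE (hlt i (by simp)) (by simpa [append_assoc] using h))

/-- Decomposition: a word containing `true` with no `0^k 1` factor splits into
blocks `0^i 1` with `i < k` followed by a tail of zeros. -/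
lemma lemD {k : ℕ} : ∀ (n : ℕ) (w : List Bool), w.length ≤ n → true ∈ w →
    ¬ (replicate k false ++ [true]) <:+: w →
    ∃ (bs : List ℕ) (r : ℕ), bs ≠ [] ∧ (∀ i ∈ bs, i < k) ∧
      w = (bs.map (fun i => replicate i false ++ [true])).flatten ++ replicate r false := by
  intro n
  induction n with
  | zero =>
    intro w hw htw _
    rw [Nat.le_zero, List.length_eq_zero_iff] at hw
    subst hw
    simp at htw
  | succ n ih =>
    intro w hw htw hninf
    set tw := w.takeWhile (fun c => !c) with htwdef
    set dw := w.dropWhile (fun c => !c) with hdwdef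
    have hsplit : tw ++ dw = w := takeWhile_append_dropWhile
    have htwrep : tw = replicate tw.length false := by
      apply eq_replicate_of_mem
      intro b hb
      have := mem_takeWhile_imp hb
      simpa using this
    have hdwne : dw ≠ [] := by
      intro hnil
      rw [hnil, append_nil] at hsplit
      rw [← hsplit, htwrep] at htw
      exact no_true_replicate htw
    have hhead : dw.head hdwne = true := by
      have h2 := head_dropWhile_not (fun c => !c) (l := w) (by simpa [← hdwdef] using hdwne)
      simp only [Bool.not_eq_false'] at h2
      exact h2
    set w₂ := dw.tail with hw2def
    have hdwcons : dw = true :: w₂ := by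
      rw [hw2def, ← hhead]
      exact (cons_head_tail hdwne).symm
    set b := tw.length with hb
    have hwb : w = replicate b false ++ ([true] ++ w₂) := by
      rw [← hsplit, hdwcons, ← htwrep]; rfl
    have hbk : b < k := by
      by_contra hge
      push_neg at hge
      apply hninf
      refine ⟨replicate (b - k) false, w₂, ?_⟩
      rw [hwb, ← append_assoc, ← append_assoc, ← replicate_add,
        Nat.sub_add_cancel hge]
    have hlen : w₂.length ≤ n := by
      have h1 := congrArg List.length hwb
      simp only [List.length_append, List.length_replicate, List.length_cons,
        List.length_singleton, List.length_nil] at h1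
      omega
    by_cases htw2 : true ∈ w₂
    · have hninf2 : ¬ (replicate k false ++ [true]) <:+: w₂ := by
        intro h
        exact hninf (h.trans ⟨replicate b false ++ [true], [], by simp [hwb, append_assoc]⟩)
      obtain ⟨bs', r, hne', hlt', heq'⟩ := ih w₂ hlen htw2 hninf2
      refine ⟨b :: bs', r, by simp, ?_, ?_⟩
      · intro i hi
        rcases List.mem_cons.mp hi with h | h
        · omega
        · exact hlt' i h
      · rw [hwb, heq']
        simp [append_assoc]
    · have hw2rep : w₂ = replicate w₂.length false := by
        apply eq_replicate_of_mem
        intro c hc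
        cases c
        · rfl
        · exact absurd hc htw2
      refine ⟨[b], w₂.length, by simp, by intro i hi; simp at hi; omega, ?_⟩
      rw [hwb, hw2rep]
      simp [append_assoc]

/-- Every `y`-bordered word contains `0^k 1` when `y = V 1 0^m` with `k ≤ m`. -/
lemma lemF2 {k m : ℕ} (hkm : k ≤ m) (V : List Bool) {z : List Bool}
    (hb : IsBordered (V ++ ([true] ++ replicate m false)) z) :
    (replicate k false ++ [true]) <:+: z := by
  obtain ⟨hne, ⟨t, ht⟩, ⟨s, hs⟩⟩ := hb
  have htne : t ≠ [] := by
    intro h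
    exact hne (by rw [← ht, h, append_nil])
  by_cases htt : true ∈ t
  · set tw := t.takeWhile (fun c => !c) with htwdef
    set dw := t.dropWhile (fun c => !c) with hdwdef
    set b := tw.length with hbdef
    have hsplit : tw ++ dw = t := takeWhile_append_dropWhile
    have htwrep : tw = replicate b false :=
      eq_replicate_of_mem (fun c hc => by simpa using mem_takeWhile_imp hc)
    have hdwne : dw ≠ [] := by
      intro hnil
      rw [hnil, append_nil] at hsplit
      rw [← hsplit, htwrep] at htt
      exact no_true_replicate htt
    have hdwcons : dw = true :: dw.tail := by
      have hc := (cons_head_tail hdwne).symm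
      have hh : dw.head hdwne = true := by
        have h2 := head_dropWhile_not (fun c => !c) (l := t) (by simpa [← hdwdef] using hdwne)
        simp only [Bool.not_eq_false'] at h2
        exact h2
      rw [hh] at hc
      exact hc
    refine ⟨V ++ [true] ++ replicate (m + b - k) false, dw.tail, ?_⟩
    rw [← ht, ← hsplit, hdwcons, htwrep]
    simp only [append_assoc, cons_append, singleton_append]
    refine congrArg (fun l => V ++ l) ?_
    refine congrArg (fun l => true :: l) ?_
    simp only [nil_append, tail_cons, singleton_append]
    exact rep_shuffle (by omega) _
  · exfalso
    set tl := t.length with htl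
    have htrep : t = replicate tl false := by
      apply eq_replicate_of_mem
      intro c hc
      cases c
      · rfl
      · exact absurd hc htt
    have hlen : s.length = tl := by
      have := congrArg List.length (hs.trans ht.symm)
      simp at this
      omega
    have hsne : 1 ≤ s.length := by
      rw [hlen, htl]
      cases t
      · exact absurd rfl htne
      · simp
    have h1 : z = (s ++ V) ++ ([true] ++ replicate m false) := by
      rw [← hs]; simp [append_assoc]
    have key : List.drop ((s ++ V).length) z = [true] ++ replicate m false := by
      rw [h1, drop_left]
    have h2 : z = V ++ ([true] ++ replicate (m + tl) false) := by
      rw [← ht, htrep, replicate_add]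
      simp [append_assoc]
    have key2 : List.drop ((s ++ V).length) z
        = replicate (m + tl - (s.length - 1)) false := by
      rw [h2, drop_append]
      rw [length_append]
      rw [drop_eq_nil_of_le (by omega), nil_append]
      rw [Nat.add_sub_cancel]
      rw [singleton_append]
      conv_lhs => rw [show s.length = (s.length - 1) + 1 by omega]
      rw [drop_succ_cons, drop_replicate]
    rw [key2] at key
    exact no_true_replicate (n := m + tl - (s.length - 1)) (by rw [key]; simp)

/-- If `0^k 1` occurs in `y 1 y` but not in `y`, then `y` ends with `0^k`. -/
lemma lemR1 {k : ℕ} {y : List Bool}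
    (h1 : ¬ (replicate k false ++ [true]) <:+: y)
    (hocc : (replicate k false ++ [true]) <:+: (y ++ [true] ++ y)) :
    ∃ y', y = y' ++ replicate k false := by
  obtain ⟨s, t, hst⟩ := hocc
  set n := y.length with hn
  by_cases hc1 : s.length + (k + 1) ≤ n
  · exfalso
    apply h1
    have hpre1 : s ++ (replicate k false ++ [true]) <+: y ++ [true] ++ y :=
      ⟨t, by simpa [append_assoc] using hst⟩
    have hpre2 : y <+: y ++ [true] ++ y := by
      rw [append_assoc]; exact prefix_append _ _
    obtain ⟨u, hu⟩ := prefix_of_prefix_length_le hpre1 hpre2 (by simp; omega)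
    exact ⟨s, u, by simpa [append_assoc] using hu⟩
  · by_cases hc2 : n + 1 ≤ s.length
    · exfalso
      apply h1
      have hpre1 : y ++ [true] <+: y ++ [true] ++ y := prefix_append _ _
      have hpre2 : s <+: y ++ [true] ++ y :=
        ⟨(replicate k false ++ [true]) ++ t, by simpa [append_assoc] using hst⟩
      obtain ⟨s', rfl⟩ := prefix_of_prefix_length_le hpre1 hpre2 (by simp; omega)
      rw [append_assoc (y ++ [true]), append_assoc (y ++ [true])] at hst
      have := append_cancel_left hst
      exact ⟨s', t, by simpa [append_assoc] using this⟩
    · push_neg at hc1 hc2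
      by_cases hc3 : s.length + k = n
      · have ht1 := congrArg (List.take (n + 1)) hst
        have hL : List.take (n+1) (s ++ (replicate k false ++ [true]) ++ t)
            = s ++ (replicate k false ++ [true]) := by
          rw [take_append, take_of_length_le (by simp; omega),
            Nat.sub_eq_zero_of_le (by simp; omega), take_zero, append_nil]
        have hR : List.take (n+1) (y ++ [true] ++ y) = y ++ [true] := by
          rw [take_append, take_of_length_le (by simp [hn]),
            Nat.sub_eq_zero_of_le (by simp [hn]), take_zero, append_nil]
        rw [hL, hR] at ht1
        rw [← append_assoc] at ht1
        exact ⟨s, (append_cancel_right ht1).symm⟩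
      · exfalso
        have hlt : n - s.length < k := by omega
        rw [append_assoc, append_assoc, append_assoc] at hst
        have hd := congrArg (List.drop s.length) hst
        rw [drop_left] at hd
        rw [drop_append, Nat.sub_eq_zero_of_le (by omega), drop_zero] at hd
        set r := List.drop s.length y with hr
        have hrlen : r.length = n - s.length := by rw [hr]; simp [hn]
        have hL2 : List.take (r.length + 1) (replicate k false ++ ([true] ++ t))
            = replicate (r.length + 1) false := by
          rw [take_append, take_replicate, length_replicate,
            Nat.sub_eq_zero_of_le (by omega), take_zero, append_nil,
            min_eq_left (by omega)]
        have hR2 : List.take (r.length + 1) (r ++ ([true] ++ y)) = r ++ [true] := by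
          rw [take_append, take_of_length_le (by omega),
            show r.length + 1 - r.length = 1 by omega, singleton_append, take_succ_cons,
            take_zero]
        have := congrArg (List.take (r.length + 1)) hd
        rw [hL2, hR2] at this
        exact no_true_replicate (by rw [this]; simp)

end Aux

theorem stmt_11 (k : ℕ) (hk : 1 ≤ k) (x : List Bool)
    (hx : x = List.replicate k false ++ [true]) (y : List Bool) :
    (∃ (bs : List ℕ) (m : ℕ), bs ≠ [] ∧ (∀ i ∈ bs, i < k) ∧ k ≤ m ∧
        y = (bs.map (fun i => List.replicate i false ++ [true])).flatten ++
              List.replicate m false) ↔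
      (¬ x <:+: y ∧ ∀ z : List Bool, IsBordered y z → x <:+: z) := by
  subst hx
  constructor
  · rintro ⟨bs, m, hbs, hlt, hkm, rfl⟩
    refine ⟨lemC bs hlt m, ?_⟩
    intro z hz
    obtain ⟨bs₀, i, rfl⟩ := bs.eq_nil_or_concat.resolve_left hbs
    have hy : ((bs₀.concat i).map (fun i => List.replicate i false ++ [true])).flatten ++
          List.replicate m false
        = ((bs₀.map (fun i => List.replicate i false ++ [true])).flatten
            ++ List.replicate i false) ++ ([true] ++ List.replicate m false) := by
      simp [concat_eq_append, append_assoc]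
    rw [hy] at hz
    exact lemF2 hkm _ hz
  · rintro ⟨h1, h2⟩
    by_cases htrue : true ∈ y
    · have hb0 : IsBordered y (y ++ [true] ++ y) := by
        refine ⟨?_, ⟨[true] ++ y, (append_assoc _ _ _).symm⟩, suffix_append _ _⟩
        intro h
        apply_fun List.length at h
        simp at h
      obtain ⟨y', hy'⟩ := lemR1 h1 (h2 _ hb0)
      obtain ⟨bs, r, hne, hltb, heq⟩ := lemD y.length y le_rfl htrue h1
      have hkr : k ≤ r := by
        by_contra hlt2
        push_neg at hlt2
        obtain ⟨bs₀, i, rfl⟩ := bs.eq_nil_or_concat.resolve_left hne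
        have hsq : y = ((bs₀.map (fun i => List.replicate i false ++ [true])).flatten
            ++ List.replicate i false) ++ ([true] ++ List.replicate r false) := by
          rw [heq]; simp [concat_eq_append, append_assoc]
        have hsuf1 : [true] ++ List.replicate r false <:+ y := ⟨_, hsq.symm⟩
        have hsuf2 : List.replicate k false <:+ y := ⟨y', hy'.symm⟩
        have := suffix_of_suffix_length_le hsuf1 hsuf2 (by simp; omega)
        exact no_true_replicate (this.subset (by simp))
      exact ⟨bs, r, hne, hltb, hkr, heq⟩
    · exfalso
      have hyrep : y = List.replicate y.length false := by
        apply eq_replicate_of_mem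
        intro c hc
        cases c
        · rfl
        · exact absurd hc htrue
      have hb : IsBordered y (y ++ [false]) := by
        refine ⟨?_, prefix_append _ _, ⟨[false], ?_⟩⟩
        · intro h
          apply_fun List.length at h
          simp at h
        · rw [hyrep, singleton_append, ← replicate_succ, replicate_succ']
      have hx2 := h2 _ hb
      have hmem := hx2.subset (show true ∈ List.replicate k false ++ [true] by simp)
      rw [hyrep, ← replicate_succ'] at hmem
      exact no_true_replicate hmem
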